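/- arXiv:1403.3359 — 2 statements merged into one kernel-verified Lean document; each statement's English description precedes it below -/
import Mathlib

section
/- The k-step-ahead optimal predictor is E[y_t | 𝔽_{t-k}] = Σ_{i=0}^{k-1} ξ_{t,i}·φ₀(t-i) + ξ_{t,k}·y_{t-k} + φ₂(t-k+1)·ξ_{t,k-1}·y_{t-k-1}. -/
open MeasureTheory Filter Finset

/-- Dual (bottom-end) recursion for the Green-function determinants. -/
lemma xi_dual_rec (φ₁ φ₂ : ℤ → ℝ) (ξ : ℤ → ℤ → ℝ)
    (hξ0 : ∀ t, ξ t 0 = 1) (hξm1 : ∀ t, ξ t (-1) = 0)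
    (hξrec : ∀ t i : ℤ, 1 ≤ i → ξ t i = φ₁ t * ξ (t - 1) (i - 1) + φ₂ t * ξ (t - 2) (i - 2)) :
    ∀ n : ℕ, ∀ t : ℤ,
      ξ t ((n : ℤ) + 1) = φ₁ (t - n) * ξ t n + φ₂ (t - n + 1) * ξ t ((n : ℤ) - 1) := by
  intro n
  induction n using Nat.strong_induction_on with
  | _ n ih =>
    match n with
    | 0 =>
      intro t
      have h1 := hξrec t 1 (by norm_num)
      simp only [Nat.cast_zero, zero_add, sub_zero] at *
      rw [h1]
      norm_num [hξ0, hξm1]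
    | 1 =>
      intro t
      have h2 := hξrec t 2 (by norm_num)
      have h1 := hξrec t 1 (by norm_num)
      have h1' := hξrec (t - 1) 1 (by norm_num)
      norm_num [hξ0, hξm1] at h2 h1 h1' ⊢
      rw [h2, h1, h1']
      ring
    | (m + 2) =>
      intro t
      have hA := hξrec t ((m : ℤ) + 3) (by omega)
      have hB := ih (m + 1) (by omega) (t - 1)
      have hC := ih m (by omega) (t - 2)
      have hD := hξrec t ((m : ℤ) + 2) (by omega)
      have hE := hξrec t ((m : ℤ) + 1) (by omega)
      push_cast
      push_cast at hB hC
      simp only [show (m:ℤ)+2+1 = (m:ℤ)+3 from by ring,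
        show (m:ℤ)+3-1 = (m:ℤ)+2 from by ring,
        show (m:ℤ)+3-2 = (m:ℤ)+1 from by ring,
        show (m:ℤ)+2-1 = (m:ℤ)+1 from by ring,
        show (m:ℤ)+2-2 = (m:ℤ) from by ring,
        show (m:ℤ)+1-1 = (m:ℤ) from by ring,
        show (m:ℤ)+1-2 = (m:ℤ)-1 from by ring,
        show (m:ℤ)+1+1 = (m:ℤ)+2 from by ring,
        show t-1-((m:ℤ)+1) = t-((m:ℤ)+2) from by ring,
        show t-1-((m:ℤ)+1)+1 = t-((m:ℤ)+1) from by ring,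
        show t-2-(m:ℤ) = t-((m:ℤ)+2) from by ring,
        show t-2-(m:ℤ)+1 = t-((m:ℤ)+1) from by ring,
        show t-((m:ℤ)+2)+1 = t-((m:ℤ)+1) from by ring] at hA hB hC hD hE ⊢
      linear_combination hA + φ₁ t * hB + φ₂ t * hC
        - φ₁ (t - ((m:ℤ)+2)) * hD - φ₂ (t - ((m:ℤ)+1)) * hE

/-- Pointwise expansion of `y t` in terms of `𝔽 (t-k)`-data and innovations. -/
lemma y_expand {Ω : Type*}
    (ε y : ℤ → Ω → ℝ) (φ₀ φ₁ φ₂ : ℤ → ℝ) (ξ : ℤ → ℤ → ℝ)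
    (hξ0 : ∀ t, ξ t 0 = 1) (hξm1 : ∀ t, ξ t (-1) = 0)
    (hξrec : ∀ t i : ℤ, 1 ≤ i → ξ t i = φ₁ t * ξ (t - 1) (i - 1) + φ₂ t * ξ (t - 2) (i - 2))
    (hy : ∀ τ, ∀ ω, y τ ω = φ₀ τ + φ₁ τ * y (τ - 1) ω + φ₂ τ * y (τ - 2) ω + ε τ ω)
    (t : ℤ) :
    ∀ k : ℕ, 1 ≤ k → ∀ ω,
      y t ω = (∑ i ∈ Finset.range k, ξ t i * (φ₀ (t - (i : ℤ)) + ε (t - (i : ℤ)) ω))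
        + ξ t k * y (t - (k : ℤ)) ω
        + φ₂ (t - (k : ℤ) + 1) * ξ t ((k : ℤ) - 1) * y (t - (k : ℤ) - 1) ω := by
  intro k hk
  induction k, hk using Nat.le_induction with
  | base =>
    intro ω
    have h1 := hξrec t 1 (by norm_num)
    simp only [Finset.sum_range_one, Nat.cast_zero, Nat.cast_one, sub_zero] at *
    rw [hξ0, h1]
    norm_num [hξ0, hξm1]
    rw [hy t ω]
    ring
  | succ k hk ih =>
    intro ω
    have hdual := xi_dual_rec φ₁ φ₂ ξ hξ0 hξm1 hξrec k t
    have hsub := hy (t - (k : ℤ)) ω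
    have := ih ω
    rw [hsub] at this
    rw [this, Finset.sum_range_succ]
    push_cast
    simp only [show (k:ℤ)+1-1 = (k:ℤ) from by ring,
      show t-(k:ℤ)-1+1 = t-(k:ℤ) from by ring,
      show t-(k:ℤ)-1-1 = t-(k:ℤ)-2 from by ring,
      show t-((k:ℤ)+1) = t-(k:ℤ)-1 from by ring,
      show t-((k:ℤ)+1)-1 = t-(k:ℤ)-2 from by ring,
      show t-((k:ℤ)+1)+1 = t-(k:ℤ) from by ring]
    rw [hdual]
    ring

/-- The `k`-step-ahead optimal predictor of the time-varying AR(2):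
`E[y_t | 𝔽_{t-k}] = Σ_{i=0}^{k-1} ξ_{t,i}·φ₀(t-i) + ξ_{t,k}·y_{t-k}
  + φ₂(t-k+1)·ξ_{t,k-1}·y_{t-k-1}` a.s. -/
theorem optimal_predictor_tvar2
    {Ω : Type*} {m : MeasurableSpace Ω} {μ : Measure Ω} [IsProbabilityMeasure μ]
    (𝔽 : Filtration ℤ m)
    (ε y : ℤ → Ω → ℝ) (φ₀ φ₁ φ₂ : ℤ → ℝ) (ξ : ℤ → ℤ → ℝ)
    (hξ0 : ∀ t, ξ t 0 = 1) (hξm1 : ∀ t, ξ t (-1) = 0)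
    (hξrec : ∀ t i : ℤ, 1 ≤ i → ξ t i = φ₁ t * ξ (t - 1) (i - 1) + φ₂ t * ξ (t - 2) (i - 2))
    (hεint : ∀ τ, Integrable (ε τ) μ)
    (hεadapted : ∀ τ, StronglyMeasurable[𝔽 τ] (ε τ))
    (hεmds : ∀ τ, μ[ε τ | 𝔽 (τ - 1)] =ᵐ[μ] 0)
    (hy : ∀ τ, ∀ ω, y τ ω = φ₀ τ + φ₁ τ * y (τ - 1) ω + φ₂ τ * y (τ - 2) ω + ε τ ω)
    (hyint : ∀ τ, Integrable (y τ) μ)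
    (t : ℤ) (k : ℕ) (hk : 1 ≤ k)
    (hymeas : StronglyMeasurable[𝔽 (t - (k : ℤ))] (y (t - (k : ℤ))))
    (hymeas' : StronglyMeasurable[𝔽 (t - (k : ℤ))] (y (t - (k : ℤ) - 1))) :
    μ[y t | 𝔽 (t - (k : ℤ))]
      =ᵐ[μ] fun ω =>
        (∑ i ∈ Finset.range k, ξ t i * φ₀ (t - (i : ℤ)))
          + ξ t k * y (t - (k : ℤ)) ω
          + φ₂ (t - (k : ℤ) + 1) * ξ t ((k : ℤ) - 1) * y (t - (k : ℤ) - 1) ω := by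
  set s : ℤ := t - (k : ℤ) with hs
  set f : Ω → ℝ := fun ω =>
    (∑ i ∈ Finset.range k, ξ t i * φ₀ (t - (i : ℤ)))
      + ξ t k * y s ω + φ₂ (s + 1) * ξ t ((k : ℤ) - 1) * y (s - 1) ω with hf
  set g : Ω → ℝ := fun ω => ∑ i ∈ Finset.range k, ξ t i * ε (t - (i : ℤ)) ω with hg
  have hyeq : y t = f + g := by
    funext ω
    rw [y_expand ε y φ₀ φ₁ φ₂ ξ hξ0 hξm1 hξrec hy t k hk ω]
    simp only [hf, hg, Pi.add_apply, mul_add, Finset.sum_add_distrib]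
    ring
  have hfint : Integrable f μ :=
    ((integrable_const _).add ((hyint s).const_mul _)).add ((hyint (s - 1)).const_mul _)
  have hgint : Integrable g μ :=
    integrable_finset_sum _ fun i _ => (hεint (t - (i : ℤ))).const_mul _
  have hfmeas : StronglyMeasurable[𝔽 s] f :=
    ((stronglyMeasurable_const.add (hymeas.const_mul _)).add (hymeas'.const_mul _))
  have hcf : μ[f | 𝔽 s] = f := condExp_of_stronglyMeasurable (𝔽.le s) hfmeas hfint
  have hzero : ∀ i ∈ Finset.range k, μ[ε (t - (i : ℤ)) | 𝔽 s] =ᵐ[μ] 0 := by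
    intro i hi
    have hle : s ≤ t - (i : ℤ) - 1 := by
      simp only [hs]
      have : (i : ℤ) + 1 ≤ (k : ℤ) := by exact_mod_cast Finset.mem_range.mp hi
      omega
    have htower := condExp_condExp_of_le (𝔽.mono hle) (𝔽.le (t - (i : ℤ) - 1))
      (f := ε (t - (i : ℤ))) (μ := μ)
    refine htower.symm.trans ?_
    refine (condExp_congr_ae (hεmds (t - (i : ℤ)))).trans ?_
    simp [condExp_zero]
  have hterm : ∀ i ∈ Finset.range k,
      μ[fun ω => ξ t i * ε (t - (i : ℤ)) ω | 𝔽 s] =ᵐ[μ] 0 := by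
    intro i hi
    have hsmul : μ[fun ω => ξ t i * ε (t - (i : ℤ)) ω | 𝔽 s]
        =ᵐ[μ] ξ t i • μ[ε (t - (i : ℤ)) | 𝔽 s] := by
      exact
        condExp_smul (μ := μ) (m := (𝔽 s : MeasurableSpace Ω)) (ξ t i) (ε (t - (i : ℤ)))
    refine hsmul.trans ?_
    filter_upwards [hzero i hi] with ω hω
    simp [hω]
  have hcg : μ[g | 𝔽 s] =ᵐ[μ] 0 := by
    have hgdef : g = ∑ i ∈ Finset.range k, fun ω => ξ t i * ε (t - (i : ℤ)) ω := by
      funext ω; simp [hg]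
    have hsum : μ[g | 𝔽 s] =ᵐ[μ]
        ∑ i ∈ Finset.range k, μ[fun ω => ξ t i * ε (t - (i : ℤ)) ω | 𝔽 s] := by
      rw [hgdef]
      exact condExp_finset_sum (fun (i : ℕ) _ => (hεint (t - (i : ℤ))).const_mul (ξ t i)) _
    refine hsum.trans ?_
    have hall : ∀ᵐ x ∂μ, ∀ i ∈ Finset.range k,
        (μ[fun ω => ξ t i * ε (t - (i : ℤ)) ω | 𝔽 s]) x = 0 := by
      rw [Filter.eventually_all_finset]
      intro i hi
      filter_upwards [hterm i hi] with x hx using hx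
    filter_upwards [hall] with x hx
    simp only [Finset.sum_apply, Pi.zero_apply]
    exact Finset.sum_eq_zero hx
  have hadd : μ[y t | 𝔽 s] =ᵐ[μ] μ[f | 𝔽 s] + μ[g | 𝔽 s] := by
    rw [hyeq]; exact condExp_add hfint hgint _
  refine hadd.trans ?_
  rw [hcf]
  filter_upwards [hcg] with ω hωg
  simp only [Pi.add_apply, hωg, Pi.zero_apply, add_zero, hf]
end

section
/- Under Assumption A.1, the autocovariance satisfies the Green-function recursion γ_{t,k} = ξ_{t,k}·Var(y_{t-k}) + φ₂(t-k+1)·ξ_{t,k-1}·Cov(y_{t-k}, y_{t-k-1}) for all k ≥ 1. -/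
open MeasureTheory Filter Finset
open scoped ENNReal NNReal

private lemma one_div_one_eq' : (1:ℝ≥0∞)/1 = 1/2 + 1/2 := by
  rw [one_div, one_div, inv_one, ENNReal.inv_two_add_inv_two]

private lemma memL2_mul_integrable' {Ω : Type*} {m : MeasurableSpace Ω} {μ : Measure Ω}
    [IsFiniteMeasure μ] {f g : Ω → ℝ}
    (hf : MemLp f 2 μ) (hg : MemLp g 2 μ) :
    Integrable (fun ω => f ω * g ω) μ := by
  rw [← memLp_one_iff_integrable]
  exact hg.smul (φ := f) hf (hpqr := ⟨by rw [ENNReal.inv_two_add_inv_two, inv_one]⟩)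

private lemma tendsto_int_mul' {Ω : Type*} {m : MeasurableSpace Ω} {μ : Measure Ω}
    [IsFiniteMeasure μ] {f g : Ω → ℝ} {F : ℕ → Ω → ℝ}
    (hf : MemLp f 2 μ) (hg : MemLp g 2 μ) (hF : ∀ K, MemLp (F K) 2 μ)
    (h : Tendsto (fun K => eLpNorm (f - F K) 2 μ) atTop (nhds 0)) :
    Tendsto (fun K => ∫ ω, g ω * F K ω ∂μ) atTop (nhds (∫ ω, g ω * f ω ∂μ)) := by
  apply tendsto_integral_of_L1' _ (memL2_mul_integrable' hg hf).1
    (Eventually.of_forall fun K => memL2_mul_integrable' hg (hF K))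
  have hb : ∀ K, eLpNorm ((fun ω => g ω * F K ω) - fun ω => g ω * f ω) 1 μ
      ≤ eLpNorm g 2 μ * eLpNorm (f - F K) 2 μ := by
    intro K
    have he : ((fun ω => g ω * F K ω) - fun ω => g ω * f ω) = g • (F K - f) := by
      funext ω
      simp only [Pi.sub_apply, Pi.smul_apply', smul_eq_mul]
      ring
    rw [he, eLpNorm_sub_comm (f := f)]
    exact eLpNorm_smul_le_mul_eLpNorm ((hF K).1.sub hf.1) hg.1 (hpqr := ⟨by rw [ENNReal.inv_two_add_inv_two, inv_one]⟩)
  have hlim : Tendsto (fun K => eLpNorm g 2 μ * eLpNorm (f - F K) 2 μ) atTop (nhds 0) := by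
    have := ENNReal.Tendsto.const_mul h (Or.inr hg.eLpNorm_ne_top)
    simpa using this
  exact tendsto_of_tendsto_of_tendsto_of_le_of_le tendsto_const_nhds hlim
    (fun K => zero_le) hb

private lemma xi_split' (φ₁ φ₂ : ℤ → ℝ) (ξ : ℤ → ℤ → ℝ)
    (hξ0 : ∀ t, ξ t 0 = 1) (hξm1 : ∀ t, ξ t (-1) = 0)
    (hξrec : ∀ t i : ℤ, 1 ≤ i →
      ξ t i = φ₁ t * ξ (t - 1) (i - 1) + φ₂ t * ξ (t - 2) (i - 2))
    (k : ℕ) (hk : 1 ≤ k) :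
    ∀ (t : ℤ) (j : ℕ), ξ t ((k : ℤ) + (j : ℤ))
      = ξ t (k : ℤ) * ξ (t - (k : ℤ)) (j : ℤ)
        + φ₂ (t - (k : ℤ) + 1) * ξ t ((k : ℤ) - 1) * ξ (t - (k : ℤ) - 1) ((j : ℤ) - 1) := by
  induction k, hk using Nat.le_induction with
  | base =>
    intro t j
    have h1 := hξrec t (1 + (j : ℤ)) (by omega)
    have h2 := hξrec t 1 le_rfl
    rw [show (1 : ℤ) + (j:ℤ) - 1 = (j:ℤ) by ring,
        show (1:ℤ) + (j:ℤ) - 2 = (j:ℤ) - 1 by ring] at h1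
    rw [show (1:ℤ) - 1 = 0 by ring, show (1:ℤ) - 2 = -1 by ring] at h2
    push_cast
    rw [h1, h2, hξ0, hξm1, hξ0]
    ring_nf
  | succ k hk ih =>
    intro t j
    have h1 := ih t (j + 1)
    have h2 := hξrec (t - (k:ℤ)) ((j:ℤ) + 1) (by omega)
    have h3 := ih t 1
    have h4 := hξrec (t - (k:ℤ)) 1 le_rfl
    push_cast at h1 h3 ⊢
    rw [show ((j:ℤ) + 1) - 1 = (j:ℤ) by ring, show ((j:ℤ)+1) - 2 = (j:ℤ) - 1 by ring] at h2
    rw [show (1:ℤ) - 1 = 0 by ring, show (1:ℤ) - 2 = -1 by ring] at h4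
    rw [show ((j:ℤ) + 1 - 1) = (j:ℤ) by ring] at h1
    rw [h4, hξm1, hξ0] at h3
    have goal1 : ((k:ℤ) + 1 + (j:ℤ)) = (k:ℤ) + ((j:ℤ) + 1) := by ring
    rw [goal1, h1, h2]
    rw [show t - ((k:ℤ)+1) = t - (k:ℤ) - 1 by ring,
        show t - (k:ℤ) - 1 + 1 = t - (k:ℤ) by ring,
        show (k:ℤ) + 1 - 1 = (k:ℤ) by ring,
        show t - (k:ℤ) - 1 - 1 = t - (k:ℤ) - 2 by ring]
    rw [h3]
    ring

private lemma sum_range_add' {M : Type*} [AddCommMonoid M] (f : ℕ → M) (m n : ℕ) :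
    ∑ i ∈ Finset.range (m + n), f i
      = ∑ i ∈ Finset.range m, f i + ∑ j ∈ Finset.range n, f (m + j) := by
  induction n with
  | zero => simp
  | succ n ih =>
    rw [show m + (n+1) = (m+n)+1 by ring, Finset.sum_range_succ, ih,
      Finset.sum_range_succ, add_assoc]

private def Spart {Ω : Type*} (ε : ℤ → Ω → ℝ) (φ₀ : ℤ → ℝ) (ξ : ℤ → ℤ → ℝ)
    (u : ℤ) (K : ℕ) : Ω → ℝ :=
  fun ω => ∑ i ∈ Finset.range K, ξ u i * (φ₀ (u - (i : ℤ)) + ε (u - (i : ℤ)) ω)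

/-- Under Assumption A.1, the autocovariance satisfies the Green-function
recursion `γ_{t,k} = ξ_{t,k}·Var(y_{t-k}) + φ₂(t-k+1)·ξ_{t,k-1}·Cov(y_{t-k}, y_{t-k-1})`
for all `k ≥ 1`. -/
theorem autocovariance_recursion_tvar2
    {Ω : Type*} {m : MeasurableSpace Ω} {μ : Measure Ω} [IsProbabilityMeasure μ]
    (ε : ℤ → Ω → ℝ) (y : ℤ → Ω → ℝ) (φ₀ φ₁ φ₂ : ℤ → ℝ) (σ2 : ℤ → ℝ) (ξ : ℤ → ℤ → ℝ)
    (hξ0 : ∀ t, ξ t 0 = 1) (hξm1 : ∀ t, ξ t (-1) = 0)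
    (hξrec : ∀ t i : ℤ, 1 ≤ i →
      ξ t i = φ₁ t * ξ (t - 1) (i - 1) + φ₂ t * ξ (t - 2) (i - 2))
    (hεL2 : ∀ τ, MemLp (ε τ) 2 μ)
    (hεmean : ∀ τ, ∫ ω, ε τ ω ∂μ = 0)
    (hεuncorr : ∀ s τ : ℤ, s ≠ τ → ∫ ω, ε s ω * ε τ ω ∂μ = 0)
    (hσ : ∀ τ, σ2 τ = ∫ ω, (ε τ ω) ^ 2 ∂μ)
    (hyL2 : ∀ t, MemLp (y t) 2 μ)
    (hyMA : ∀ t, Tendsto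
      (fun K : ℕ => eLpNorm
        (y t - fun ω => ∑ i ∈ Finset.range K,
          ξ t i * (φ₀ (t - (i : ℤ)) + ε (t - (i : ℤ)) ω)) 2 μ)
      atTop (nhds 0))
    (t : ℤ) (k : ℕ) (hk : 1 ≤ k) :
    ∫ ω, (y t ω - ∫ ω', y t ω' ∂μ)
        * (y (t - (k : ℤ)) ω - ∫ ω', y (t - (k : ℤ)) ω' ∂μ) ∂μ
      = ξ t k * (∫ ω, (y (t - (k : ℤ)) ω - ∫ ω', y (t - (k : ℤ)) ω' ∂μ) ^ 2 ∂μ)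
        + φ₂ (t - (k : ℤ) + 1) * ξ t ((k : ℤ) - 1)
            * ∫ ω, (y (t - (k : ℤ)) ω - ∫ ω', y (t - (k : ℤ)) ω' ∂μ)
                * (y (t - (k : ℤ) - 1) ω - ∫ ω', y (t - (k : ℤ) - 1) ω' ∂μ) ∂μ := by
  have hsplit := xi_split' φ₁ φ₂ ξ hξ0 hξm1 hξrec k hk
  have hyMA' : ∀ u, Tendsto (fun K : ℕ => eLpNorm (y u - Spart ε φ₀ ξ u K) 2 μ)
      atTop (nhds 0) := fun u => hyMA u
  have hSL2 : ∀ (u : ℤ) (K : ℕ), MemLp (Spart ε φ₀ ξ u K) 2 μ := by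
    intro u K
    exact memLp_finsetSum _ (fun i _ => ((memLp_const (φ₀ (u - (i:ℤ)))).add (hεL2 (u - (i:ℤ)))).const_mul (ξ u i))
  -- splitting of partial sums
  have hsum : ∀ (K : ℕ) (ω : Ω), Spart ε φ₀ ξ t (k + (K+1)) ω
      = Spart ε φ₀ ξ t k ω + ξ t (k:ℤ) * Spart ε φ₀ ξ (t - (k:ℤ)) (K+1) ω
        + (φ₂ (t - (k:ℤ) + 1) * ξ t ((k:ℤ) - 1)) * Spart ε φ₀ ξ (t - (k:ℤ) - 1) K ω := by
    intro K ω
    simp only [Spart]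
    rw [sum_range_add']
    rw [add_assoc]
    congr 1
    have hterm : ∀ j ∈ Finset.range (K+1),
        ξ t ((k + j : ℕ) : ℤ) * (φ₀ (t - ((k + j : ℕ) : ℤ)) + ε (t - ((k + j : ℕ) : ℤ)) ω)
        = ξ t (k:ℤ) * (ξ (t - (k:ℤ)) (j:ℤ) * (φ₀ (t - (k:ℤ) - (j:ℤ)) + ε (t - (k:ℤ) - (j:ℤ)) ω))
          + (φ₂ (t - (k:ℤ) + 1) * ξ t ((k:ℤ) - 1))
              * (ξ (t - (k:ℤ) - 1) ((j:ℤ) - 1) * (φ₀ (t - (k:ℤ) - (j:ℤ)) + ε (t - (k:ℤ) - (j:ℤ)) ω)) := by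
      intro j _
      have h := hsplit t j
      push_cast
      rw [show t - ((k:ℤ) + (j:ℤ)) = t - (k:ℤ) - (j:ℤ) by ring, h]
      ring
    rw [Finset.sum_congr rfl hterm, Finset.sum_add_distrib, ← Finset.mul_sum, ← Finset.mul_sum]
    congr 2
    rw [Finset.sum_range_succ' _ K]
    have h0 : ξ (t - (k:ℤ) - 1) (((0:ℕ):ℤ) - 1) * (φ₀ (t - (k:ℤ) - ((0:ℕ):ℤ)) + ε (t - (k:ℤ) - ((0:ℕ):ℤ)) ω) = 0 := by
      norm_num [hξm1]
    rw [h0, add_zero]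
    apply Finset.sum_congr rfl
    intro j _
    push_cast
    rw [show ((j:ℤ) + 1) - 1 = (j:ℤ) by ring,
        show t - (k:ℤ) - ((j:ℤ) + 1) = t - (k:ℤ) - 1 - (j:ℤ) by ring]
  -- a.e. identity
  have hae : y t =ᵐ[μ] fun ω => Spart ε φ₀ ξ t k ω
      + ξ t (k:ℤ) * y (t - (k:ℤ)) ω
      + (φ₂ (t - (k:ℤ) + 1) * ξ t ((k:ℤ) - 1)) * y (t - (k:ℤ) - 1) ω := by
    have hmeas : AEStronglyMeasurable (y t - fun ω => Spart ε φ₀ ξ t k ω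
        + ξ t (k:ℤ) * y (t - (k:ℤ)) ω
        + (φ₂ (t - (k:ℤ) + 1) * ξ t ((k:ℤ) - 1)) * y (t - (k:ℤ) - 1) ω) μ := by
      apply (hyL2 t).1.sub
      apply AEStronglyMeasurable.add
      apply AEStronglyMeasurable.add
      · exact (hSL2 t k).1
      · exact (hyL2 _).1.const_mul _
      · exact (hyL2 _).1.const_mul _
    have hD : eLpNorm (y t - fun ω => Spart ε φ₀ ξ t k ω
        + ξ t (k:ℤ) * y (t - (k:ℤ)) ω
        + (φ₂ (t - (k:ℤ) + 1) * ξ t ((k:ℤ) - 1)) * y (t - (k:ℤ) - 1) ω) 2 μ = 0 := by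
      have hb : ∀ K : ℕ, eLpNorm (y t - fun ω => Spart ε φ₀ ξ t k ω
          + ξ t (k:ℤ) * y (t - (k:ℤ)) ω
          + (φ₂ (t - (k:ℤ) + 1) * ξ t ((k:ℤ) - 1)) * y (t - (k:ℤ) - 1) ω) 2 μ
          ≤ eLpNorm (y t - Spart ε φ₀ ξ t (k + (K+1))) 2 μ
            + ((‖ξ t (k:ℤ)‖₊ : ℝ≥0∞)
                * eLpNorm (y (t - (k:ℤ)) - Spart ε φ₀ ξ (t - (k:ℤ)) (K+1)) 2 μ
              + (‖φ₂ (t - (k:ℤ) + 1) * ξ t ((k:ℤ) - 1)‖₊ : ℝ≥0∞)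
                * eLpNorm (y (t - (k:ℤ) - 1) - Spart ε φ₀ ξ (t - (k:ℤ) - 1) K) 2 μ) := by
        intro K
        have hDeq : (y t - fun ω => Spart ε φ₀ ξ t k ω
            + ξ t (k:ℤ) * y (t - (k:ℤ)) ω
            + (φ₂ (t - (k:ℤ) + 1) * ξ t ((k:ℤ) - 1)) * y (t - (k:ℤ) - 1) ω)
            = (y t - Spart ε φ₀ ξ t (k + (K+1)))
              + (ξ t (k:ℤ) • (Spart ε φ₀ ξ (t - (k:ℤ)) (K+1) - y (t - (k:ℤ)))
                + (φ₂ (t - (k:ℤ) + 1) * ξ t ((k:ℤ) - 1))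
                    • (Spart ε φ₀ ξ (t - (k:ℤ) - 1) K - y (t - (k:ℤ) - 1))) := by
          funext ω
          simp only [Pi.add_apply, Pi.sub_apply, Pi.smul_apply, smul_eq_mul]
          linear_combination hsum K ω
        rw [hDeq]
        refine (eLpNorm_add_le ((hyL2 t).1.sub (hSL2 t _).1)
          (((((hSL2 _ _).1.sub (hyL2 _).1)).const_smul _).add
            ((((hSL2 _ _).1.sub (hyL2 _).1)).const_smul _)) one_le_two).trans ?_
        refine add_le_add le_rfl ?_
        refine (eLpNorm_add_le (((hSL2 _ _).1.sub (hyL2 _).1).const_smul _)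
          (((hSL2 _ _).1.sub (hyL2 _).1).const_smul _) one_le_two).trans ?_
        apply add_le_add
        · rw [eLpNorm_const_smul, eLpNorm_sub_comm, enorm_eq_nnnorm]
        · rw [eLpNorm_const_smul, eLpNorm_sub_comm, enorm_eq_nnnorm]
      have hlim : Tendsto (fun K : ℕ => eLpNorm (y t - Spart ε φ₀ ξ t (k + (K+1))) 2 μ
          + ((‖ξ t (k:ℤ)‖₊ : ℝ≥0∞)
              * eLpNorm (y (t - (k:ℤ)) - Spart ε φ₀ ξ (t - (k:ℤ)) (K+1)) 2 μ
            + (‖φ₂ (t - (k:ℤ) + 1) * ξ t ((k:ℤ) - 1)‖₊ : ℝ≥0∞)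
              * eLpNorm (y (t - (k:ℤ) - 1) - Spart ε φ₀ ξ (t - (k:ℤ) - 1) K) 2 μ))
          atTop (nhds 0) := by
        have hA : Tendsto (fun K : ℕ => eLpNorm (y t - Spart ε φ₀ ξ t (k + (K+1))) 2 μ)
            atTop (nhds 0) := by
          have h := (hyMA' t).comp (tendsto_add_atTop_nat (k+1))
          refine h.congr fun K => ?_
          simp only [Function.comp_apply]
          rw [show K + (k+1) = k + (K+1) by omega]
        have hB : Tendsto (fun K : ℕ =>
            eLpNorm (y (t - (k:ℤ)) - Spart ε φ₀ ξ (t - (k:ℤ)) (K+1)) 2 μ) atTop (nhds 0) := by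
          have h := (hyMA' (t - (k:ℤ))).comp (tendsto_add_atTop_nat 1)
          exact h.congr fun K => rfl
        have hC := hyMA' (t - (k:ℤ) - 1)
        have hB' := ENNReal.Tendsto.const_mul hB
          (Or.inr (ENNReal.coe_ne_top (r := ‖ξ t (k:ℤ)‖₊)))
        have hC' := ENNReal.Tendsto.const_mul hC
          (Or.inr (ENNReal.coe_ne_top (r := ‖φ₂ (t - (k:ℤ) + 1) * ξ t ((k:ℤ) - 1)‖₊)))
        simp only [mul_zero] at hB' hC'
        simpa using hA.add (hB'.add hC')
      have hle := ge_of_tendsto' hlim hb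
      exact le_antisymm hle zero_le
    have h0 := (eLpNorm_eq_zero_iff hmeas (by norm_num)).1 hD
    filter_upwards [h0] with ω hω
    have : y t ω - (Spart ε φ₀ ξ t k ω
        + ξ t (k:ℤ) * y (t - (k:ℤ)) ω
        + (φ₂ (t - (k:ℤ) + 1) * ξ t ((k:ℤ) - 1)) * y (t - (k:ℤ) - 1) ω) = 0 := hω
    linarith
  -- integrability facts
  have hyInt : ∀ u, Integrable (y u) μ := fun u => ((hyL2 u).integrable one_le_two)
  have hεInt : ∀ τ, Integrable (ε τ) μ := fun τ => ((hεL2 τ).integrable one_le_two)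
  -- value of the integral of partial sums
  have hSval : ∀ (u : ℤ) (K : ℕ), ∫ ω, Spart ε φ₀ ξ u K ω ∂μ
      = ∑ i ∈ Finset.range K, ξ u (i:ℤ) * φ₀ (u - (i:ℤ)) := by
    intro u K
    simp only [Spart]
    have hfs := integral_finset_sum (μ := μ) (Finset.range K)
      (f := fun (i : ℕ) ω => ξ u (i:ℤ) * (φ₀ (u - (i:ℤ)) + ε (u - (i:ℤ)) ω))
      (fun i _ => (((integrable_const _).add (hεInt _)).const_mul _))
    rw [hfs]
    apply Finset.sum_congr rfl
    intro i _
    rw [integral_const_mul, integral_add (integrable_const _) (hεInt _), integral_const,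
      hεmean, probReal_univ]
    simp
  -- cross: ∫ ε_s y_u = 0 for u < s
  have hEzero : ∀ s u : ℤ, u < s → ∫ ω, ε s ω * y u ω ∂μ = 0 := by
    intro s u hus
    have hT := tendsto_int_mul' (hyL2 u) (hεL2 s) (hSL2 u) (hyMA' u)
    have hz : ∀ K, ∫ ω, ε s ω * Spart ε φ₀ ξ u K ω ∂μ = 0 := by
      intro K
      have hrw : (fun ω => ε s ω * Spart ε φ₀ ξ u K ω)
          = fun ω => ∑ i ∈ Finset.range K,
              (ξ u (i:ℤ) * φ₀ (u - (i:ℤ)) * ε s ω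
                + ξ u (i:ℤ) * (ε s ω * ε (u - (i:ℤ)) ω)) := by
        funext ω
        simp only [Spart, Finset.mul_sum]
        apply Finset.sum_congr rfl
        intro i _
        ring
      have hfs := integral_finset_sum (μ := μ) (Finset.range K)
        (f := fun (i : ℕ) ω => ξ u (i:ℤ) * φ₀ (u - (i:ℤ)) * ε s ω
          + ξ u (i:ℤ) * (ε s ω * ε (u - (i:ℤ)) ω))
        (fun i _ => Integrable.add
          ((hεInt s).const_mul _)
          ((memL2_mul_integrable' (hεL2 s) (hεL2 _)).const_mul _))
      rw [hrw, hfs]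
      apply Finset.sum_eq_zero
      intro i _
      rw [integral_add ((hεInt s).const_mul _)
        ((memL2_mul_integrable' (hεL2 s) (hεL2 _)).const_mul _),
        integral_const_mul, integral_const_mul, hεmean,
        hεuncorr s (u - (i:ℤ)) (by omega)]
      ring
    have h0 : Tendsto (fun K => ∫ ω, ε s ω * Spart ε φ₀ ξ u K ω ∂μ) atTop (nhds 0) := by
      simp only [hz]
      exact tendsto_const_nhds
    exact (tendsto_nhds_unique hT h0)
  -- mean identity
  have hIntS : Integrable (Spart ε φ₀ ξ t k) μ := (hSL2 t k).integrable one_le_two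
  have hIntc1 : Integrable (fun ω => ξ t (k:ℤ) * y (t - (k:ℤ)) ω) μ := (hyInt _).const_mul _
  have hIntc2 : Integrable (fun ω =>
      (φ₂ (t - (k:ℤ) + 1) * ξ t ((k:ℤ) - 1)) * y (t - (k:ℤ) - 1) ω) μ := (hyInt _).const_mul _
  have hInt1 : Integrable (fun ω => Spart ε φ₀ ξ t k ω + ξ t (k:ℤ) * y (t - (k:ℤ)) ω) μ :=
    hIntS.add hIntc1
  have hmean : ∫ ω, y t ω ∂μ
      = (∑ i ∈ Finset.range k, ξ t (i:ℤ) * φ₀ (t - (i:ℤ)))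
        + ξ t (k:ℤ) * ∫ ω, y (t - (k:ℤ)) ω ∂μ
        + (φ₂ (t - (k:ℤ) + 1) * ξ t ((k:ℤ) - 1)) * ∫ ω, y (t - (k:ℤ) - 1) ω ∂μ := by
    rw [integral_congr_ae hae, integral_add hInt1 hIntc2, integral_add hIntS hIntc1,
      integral_const_mul, integral_const_mul, hSval]
  -- centered a.e. identity
  have hcent : (fun ω => y t ω - ∫ ω', y t ω' ∂μ) =ᵐ[μ]
      (fun ω => (∑ i ∈ Finset.range k, ξ t (i:ℤ) * ε (t - (i:ℤ)) ω)
        + ξ t (k:ℤ) * (y (t - (k:ℤ)) ω - ∫ ω', y (t - (k:ℤ)) ω' ∂μ)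
        + (φ₂ (t - (k:ℤ) + 1) * ξ t ((k:ℤ) - 1))
            * (y (t - (k:ℤ) - 1) ω - ∫ ω', y (t - (k:ℤ) - 1) ω' ∂μ)) := by
    filter_upwards [hae] with ω hω
    have hs : Spart ε φ₀ ξ t k ω - ∑ i ∈ Finset.range k, ξ t (i:ℤ) * φ₀ (t - (i:ℤ))
        = ∑ i ∈ Finset.range k, ξ t (i:ℤ) * ε (t - (i:ℤ)) ω := by
      simp only [Spart, ← Finset.sum_sub_distrib]
      apply Finset.sum_congr rfl
      intro i _
      ring
    linear_combination hω - hmean + hs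
  -- L2 membership of centered variables
  have hBL2 : MemLp (fun ω => y (t - (k:ℤ)) ω - ∫ ω', y (t - (k:ℤ)) ω' ∂μ) 2 μ :=
    (hyL2 _).sub (memLp_const _)
  have hCL2 : MemLp (fun ω => y (t - (k:ℤ) - 1) ω - ∫ ω', y (t - (k:ℤ) - 1) ω' ∂μ) 2 μ :=
    (hyL2 _).sub (memLp_const _)
  -- cross terms vanish
  have hcross : ∀ i : ℕ, i < k →
      ∫ ω, ε (t - (i:ℤ)) ω * (y (t - (k:ℤ)) ω - ∫ ω', y (t - (k:ℤ)) ω' ∂μ) ∂μ = 0 := by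
    intro i hik
    have hrw : (fun ω => ε (t - (i:ℤ)) ω * (y (t - (k:ℤ)) ω - ∫ ω', y (t - (k:ℤ)) ω' ∂μ))
        = fun ω => ε (t - (i:ℤ)) ω * y (t - (k:ℤ)) ω
            - (∫ ω', y (t - (k:ℤ)) ω' ∂μ) * ε (t - (i:ℤ)) ω := by
      funext ω; ring
    rw [hrw, integral_sub (memL2_mul_integrable' (hεL2 _) (hyL2 _))
      ((hεInt _).const_mul _), integral_const_mul, hεmean,
      hEzero _ _ (by omega)]
    ring
  -- expand the product a.e.
  have hmul : (fun ω => (y t ω - ∫ ω', y t ω' ∂μ)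
        * (y (t - (k:ℤ)) ω - ∫ ω', y (t - (k:ℤ)) ω' ∂μ)) =ᵐ[μ]
      (fun ω => (∑ i ∈ Finset.range k, ξ t (i:ℤ) * ε (t - (i:ℤ)) ω
          * (y (t - (k:ℤ)) ω - ∫ ω', y (t - (k:ℤ)) ω' ∂μ))
        + (ξ t (k:ℤ) * ((y (t - (k:ℤ)) ω - ∫ ω', y (t - (k:ℤ)) ω' ∂μ)
              * (y (t - (k:ℤ)) ω - ∫ ω', y (t - (k:ℤ)) ω' ∂μ))
          + (φ₂ (t - (k:ℤ) + 1) * ξ t ((k:ℤ) - 1))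
              * ((y (t - (k:ℤ) - 1) ω - ∫ ω', y (t - (k:ℤ) - 1) ω' ∂μ)
                * (y (t - (k:ℤ)) ω - ∫ ω', y (t - (k:ℤ)) ω' ∂μ)))) := by
    filter_upwards [hcent] with ω hω
    rw [hω, add_mul, add_mul, Finset.sum_mul]
    ring
  rw [integral_congr_ae hmul]
  -- integrability of the pieces
  have hIntTerm : ∀ i : ℕ, Integrable (fun ω => ξ t (i:ℤ) * ε (t - (i:ℤ)) ω
      * (y (t - (k:ℤ)) ω - ∫ ω', y (t - (k:ℤ)) ω' ∂μ)) μ := by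
    intro i
    have h := (memL2_mul_integrable' (hεL2 (t - (i:ℤ))) hBL2).const_mul (ξ t (i:ℤ))
    simpa [mul_assoc] using h
  have hIntSum : Integrable (fun ω => ∑ i ∈ Finset.range k, ξ t (i:ℤ) * ε (t - (i:ℤ)) ω
      * (y (t - (k:ℤ)) ω - ∫ ω', y (t - (k:ℤ)) ω' ∂μ)) μ :=
    integrable_finset_sum _ (fun i _ => hIntTerm i)
  have hIntBB : Integrable (fun ω => ξ t (k:ℤ)
      * ((y (t - (k:ℤ)) ω - ∫ ω', y (t - (k:ℤ)) ω' ∂μ)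
        * (y (t - (k:ℤ)) ω - ∫ ω', y (t - (k:ℤ)) ω' ∂μ))) μ :=
    (memL2_mul_integrable' hBL2 hBL2).const_mul _
  have hIntCB : Integrable (fun ω => (φ₂ (t - (k:ℤ) + 1) * ξ t ((k:ℤ) - 1))
      * ((y (t - (k:ℤ) - 1) ω - ∫ ω', y (t - (k:ℤ) - 1) ω' ∂μ)
        * (y (t - (k:ℤ)) ω - ∫ ω', y (t - (k:ℤ)) ω' ∂μ))) μ :=
    (memL2_mul_integrable' hCL2 hBL2).const_mul _
  have hInt23 : Integrable (fun ω => ξ t (k:ℤ)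
      * ((y (t - (k:ℤ)) ω - ∫ ω', y (t - (k:ℤ)) ω' ∂μ)
        * (y (t - (k:ℤ)) ω - ∫ ω', y (t - (k:ℤ)) ω' ∂μ))
      + (φ₂ (t - (k:ℤ) + 1) * ξ t ((k:ℤ) - 1))
      * ((y (t - (k:ℤ) - 1) ω - ∫ ω', y (t - (k:ℤ) - 1) ω' ∂μ)
        * (y (t - (k:ℤ)) ω - ∫ ω', y (t - (k:ℤ)) ω' ∂μ))) μ := hIntBB.add hIntCB
  rw [integral_add hIntSum hInt23, integral_add hIntBB hIntCB,
    integral_const_mul, integral_const_mul]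
  have hfs2 := integral_finset_sum (μ := μ) (Finset.range k)
    (f := fun (i : ℕ) ω => ξ t (i:ℤ) * ε (t - (i:ℤ)) ω
      * (y (t - (k:ℤ)) ω - ∫ ω', y (t - (k:ℤ)) ω' ∂μ))
    (fun i _ => hIntTerm i)
  rw [hfs2]
  have hzero : ∑ i ∈ Finset.range k, ∫ ω, ξ t (i:ℤ) * ε (t - (i:ℤ)) ω
      * (y (t - (k:ℤ)) ω - ∫ ω', y (t - (k:ℤ)) ω' ∂μ) ∂μ = 0 := by
    apply Finset.sum_eq_zero
    intro i hi
    have hrw : (fun ω => ξ t (i:ℤ) * ε (t - (i:ℤ)) ω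
        * (y (t - (k:ℤ)) ω - ∫ ω', y (t - (k:ℤ)) ω' ∂μ))
        = fun ω => ξ t (i:ℤ) * (ε (t - (i:ℤ)) ω
            * (y (t - (k:ℤ)) ω - ∫ ω', y (t - (k:ℤ)) ω' ∂μ)) := by
      funext ω; ring
    rw [hrw, integral_const_mul, hcross i (Finset.mem_range.1 hi), mul_zero]
  rw [hzero, zero_add]
  have h1 : ∫ ω, (y (t - (k:ℤ)) ω - ∫ ω', y (t - (k:ℤ)) ω' ∂μ)
        * (y (t - (k:ℤ)) ω - ∫ ω', y (t - (k:ℤ)) ω' ∂μ) ∂μ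
      = ∫ ω, (y (t - (k:ℤ)) ω - ∫ ω', y (t - (k:ℤ)) ω' ∂μ) ^ 2 ∂μ := by
    apply integral_congr_ae
    filter_upwards with ω
    ring
  have h2 : ∫ ω, (y (t - (k:ℤ) - 1) ω - ∫ ω', y (t - (k:ℤ) - 1) ω' ∂μ)
        * (y (t - (k:ℤ)) ω - ∫ ω', y (t - (k:ℤ)) ω' ∂μ) ∂μ
      = ∫ ω, (y (t - (k:ℤ)) ω - ∫ ω', y (t - (k:ℤ)) ω' ∂μ)
          * (y (t - (k:ℤ) - 1) ω - ∫ ω', y (t - (k:ℤ) - 1) ω' ∂μ) ∂μ := by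
    apply integral_congr_ae
    filter_upwards with ω
    ring
  rw [h1, h2]
end
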